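/- Fix k ≥ 1 and reals z_1,...,z_{2mk} with |z_i| ≤ 1, partitioned into m blocks Ī_1,...,Ī_m of size 2k each. For each j let I_j be an independent uniformly random k-subset of Ī_j and define L_j = ((1/k)Σ_{i∈I_j} z_i)^2. If (1/(2mk))Σ_{i=1}^{2mk} z_i^2 = ζ, then Pr[(1/m)Σ_{j=1}^m L_j ≤ ζ/(4k)] ≤ 2·exp(−ζm/(32k^2)). -/

import Mathlib

open Finset Real

/-- Number of `k`-subsets of `B` containing a fixed subset `s`. -/
lemma count_contain {α : Type*} [DecidableEq α] (B s : Finset α) (k : ℕ)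
    (hsB : s ⊆ B) (hsk : s.card ≤ k) :
    ((B.powersetCard k).filter (fun I => s ⊆ I)).card
      = (B.card - s.card).choose (k - s.card) := by
  rw [← Finset.card_sdiff_of_subset hsB, ← Finset.card_powersetCard]
  apply Finset.card_nbij' (fun I => I \ s) (fun J => J ∪ s)
  · intro I hI
    simp only [Finset.mem_coe, Finset.mem_filter, Finset.mem_powersetCard] at hI
    obtain ⟨⟨hIB, hIk⟩, hsI⟩ := hI
    rw [Finset.mem_coe, Finset.mem_powersetCard]
    exact ⟨Finset.sdiff_subset_sdiff hIB (Finset.Subset.refl s),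
      by rw [Finset.card_sdiff_of_subset hsI, hIk]⟩
  · intro J hJ
    rw [Finset.mem_coe, Finset.mem_powersetCard] at hJ
    obtain ⟨hJBs, hJc⟩ := hJ
    have hdJ : Disjoint J s := Finset.disjoint_of_subset_left hJBs Finset.sdiff_disjoint
    simp only [Finset.mem_coe, Finset.mem_filter, Finset.mem_powersetCard]
    refine ⟨⟨Finset.union_subset (hJBs.trans Finset.sdiff_subset) hsB, ?_⟩,
      Finset.subset_union_right⟩
    rw [Finset.card_union_of_disjoint hdJ, hJc]
    omega
  · intro I hI
    simp only [Finset.mem_coe, Finset.mem_filter] at hI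
    exact Finset.sdiff_union_of_subset hI.2
  · intro J hJ
    rw [Finset.mem_coe, Finset.mem_powersetCard] at hJ
    have hdJ : Disjoint J s := Finset.disjoint_of_subset_left hJ.1 Finset.sdiff_disjoint
    beta_reduce
    rw [Finset.union_sdiff_right, Finset.sdiff_eq_self_of_disjoint hdJ]

/-- The binomial coefficient inequality `N + 4C ≤ 4A`. -/
lemma choose_ineq (k : ℕ) (hk : 0 < k) :
    (2 * k).choose k + 4 * ((2 * k - 2).choose k) ≤ 4 * ((2 * k - 1).choose (k - 1)) := by
  obtain ⟨K, rfl⟩ : ∃ K, k = K + 1 := ⟨k - 1, by omega⟩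
  have e1 : 2 * (K + 1) = (2 * K + 1) + 1 := by ring
  rw [e1]
  have e3 : (K + 1) - 1 = K := by omega
  rw [show 2*K+1+1-2 = 2*K by omega, show 2*K+1+1-1 = 2*K+1 by omega, e3]
  have hN : (2 * K + 1 + 1).choose (K + 1)
      = (2 * K + 1).choose K + (2 * K + 1).choose (K + 1) := Nat.choose_succ_succ' _ _
  have hsymm : (2 * K + 1).choose (K + 1) = (2 * K + 1).choose K := by
    have : (2 * K + 1) - K = K + 1 := by omega
    rw [← this, Nat.choose_symm (by omega)]
  have hA : (2 * K + 1).choose (K + 1) = (2 * K).choose K + (2 * K).choose (K + 1) :=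
    Nat.choose_succ_succ' _ _
  have hmid : (2 * K).choose (K + 1) ≤ (2 * K).choose K := by
    have := Nat.choose_le_middle (K + 1) (2 * K)
    rwa [Nat.mul_div_cancel_left K (by norm_num : 0 < 2)] at this
  omega

/-- Expectation lower bound: `N/4 · Σ_B z² ≤ Σ_I (Σ_{i∈I} z)²`. -/
lemma block_exp {α : Type*} [DecidableEq α] (k : ℕ) (hk : 0 < k) (B : Finset α)
    (hB : B.card = 2 * k) (z : α → ℝ) :
    ((2 * k).choose k : ℝ) * ∑ i ∈ B, z i ^ 2
      ≤ 4 * ∑ I ∈ B.powersetCard k, (∑ i ∈ I, z i) ^ 2 := by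
  classical
  set P := B.powersetCard k with hP
  set A : ℕ := (2 * k - 1).choose (k - 1) with hA
  set C : ℕ := (2 * k - 2).choose k with hC
  set Q : ℝ := ∑ i ∈ B, z i ^ 2 with hQ
  set T : ℝ := ∑ i ∈ B, z i with hT
  -- counts
  have hcnt1 : ∀ i ∈ B, ((P.filter (fun I => i ∈ I ∧ i ∈ I)).card : ℝ) = A := by
    intro i hi
    have : (P.filter (fun I => i ∈ I ∧ i ∈ I)) = P.filter (fun I => {i} ⊆ I) := by
      apply Finset.filter_congr
      intro I _
      simp
    rw [this, count_contain B {i} k (Finset.singleton_subset_iff.2 hi) (by simp; omega), hB]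
    simp [hA]
  have hcnt2 : ∀ i ∈ B, ∀ j ∈ B, i ≠ j →
      ((P.filter (fun I => i ∈ I ∧ j ∈ I)).card : ℝ) = C := by
    intro i hi j hj hij
    have hpair : ({i, j} : Finset α).card = 2 := Finset.card_pair hij
    have hpairB : ({i, j} : Finset α) ⊆ B := by
      rw [Finset.insert_subset_iff, Finset.singleton_subset_iff]; exact ⟨hi, hj⟩
    have hfe : (P.filter (fun I => i ∈ I ∧ j ∈ I)) = P.filter (fun I => ({i, j} : Finset α) ⊆ I) := by
      apply Finset.filter_congr
      intro I _
      simp [Finset.insert_subset_iff]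
    rcases Nat.lt_or_ge k 2 with hk2 | hk2
    · -- k = 1 : both sides are zero
      have hk1 : k = 1 := by omega
      have hempty : (P.filter (fun I => i ∈ I ∧ j ∈ I)) = ∅ := by
        rw [Finset.eq_empty_iff_forall_notMem]
        intro I hI
        simp only [Finset.mem_filter, hP, Finset.mem_powersetCard] at hI
        obtain ⟨⟨_, hIc⟩, hiI, hjI⟩ := hI
        have : ({i, j} : Finset α) ⊆ I := by
          rw [Finset.insert_subset_iff, Finset.singleton_subset_iff]; exact ⟨hiI, hjI⟩
        have := Finset.card_le_card this
        rw [hpair, hIc, hk1] at this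
        omega
      have hC0 : C = 0 := by
        rw [hC, hk1]
        simp
      rw [hempty, hC0]
      simp
    · rw [hfe, count_contain B {i, j} k hpairB (by omega), hB, hpair]
      have : 2 * k - 2 - (k - 2) = k := by omega
      rw [hC, ← Nat.choose_symm (n := 2 * k - 2) (k := k - 2) (by omega), this]
  -- expansion of the sum of squares
  have hexp : ∑ I ∈ P, (∑ i ∈ I, z i) ^ 2
      = ∑ i ∈ B, ∑ j ∈ B, z i * z j * ((P.filter (fun I => i ∈ I ∧ j ∈ I)).card : ℝ) := by
    have h1 : ∀ I ∈ P, (∑ i ∈ I, z i) ^ 2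
        = ∑ i ∈ B, ∑ j ∈ B, (if i ∈ I ∧ j ∈ I then z i * z j else 0) := by
      intro I hI
      have hIB : I ⊆ B := (Finset.mem_powersetCard.1 hI).1
      have e1 : ∑ i ∈ I, z i = ∑ i ∈ B, (if i ∈ I then z i else 0) := by
        rw [Finset.sum_ite_mem, Finset.inter_eq_right.2 hIB]
      rw [sq, e1, Finset.sum_mul_sum]
      refine Finset.sum_congr rfl fun i _ => Finset.sum_congr rfl fun j _ => ?_
      split_ifs with h1 h2 h3 <;> simp_all
    rw [Finset.sum_congr rfl h1, Finset.sum_comm]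
    refine Finset.sum_congr rfl fun i _ => ?_
    rw [Finset.sum_comm]
    refine Finset.sum_congr rfl fun j _ => ?_
    rw [← Finset.sum_filter, Finset.sum_const, nsmul_eq_mul, mul_comm]
  -- compute the double sum
  have hdouble : ∑ i ∈ B, ∑ j ∈ B, z i * z j * ((P.filter (fun I => i ∈ I ∧ j ∈ I)).card : ℝ)
      = (A : ℝ) * Q + (C : ℝ) * (T ^ 2 - Q) := by
    have h2 : ∀ i ∈ B, ∑ j ∈ B, z i * z j * ((P.filter (fun I => i ∈ I ∧ j ∈ I)).card : ℝ)
        = z i ^ 2 * A + (C : ℝ) * (z i * (T - z i)) := by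
      intro i hi
      rw [← Finset.sum_erase_add _ _ hi, hcnt1 i hi]
      have h3 : ∀ j ∈ B.erase i, z i * z j * ((P.filter (fun I => i ∈ I ∧ j ∈ I)).card : ℝ)
          = (C : ℝ) * (z i * z j) := by
        intro j hj
        rw [hcnt2 i hi j (Finset.mem_of_mem_erase hj) (Ne.symm (Finset.ne_of_mem_erase hj))]
        ring
      rw [Finset.sum_congr rfl h3, ← Finset.mul_sum, ← Finset.mul_sum,
        Finset.sum_erase_eq_sub hi, ← hT]
      ring_nf
    rw [Finset.sum_congr rfl h2, Finset.sum_add_distrib, ← Finset.sum_mul, ← Finset.mul_sum]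
    have hss : ∑ i ∈ B, z i * (T - z i) = T ^ 2 - Q := by
      have e : ∀ i ∈ B, z i * (T - z i) = z i * T - z i ^ 2 := fun i _ => by ring
      rw [Finset.sum_congr rfl e, Finset.sum_sub_distrib, ← Finset.sum_mul, ← hT, ← hQ, sq]
    rw [hss, ← hQ]
    ring
  rw [hexp, hdouble]
  have hnat := choose_ineq k hk
  have hnat' : ((2 * k).choose k : ℝ) + 4 * C ≤ 4 * A := by exact_mod_cast hnat
  have hQ0 : 0 ≤ Q := by rw [hQ]; positivity
  have hT2 : (0:ℝ) ≤ T ^ 2 := sq_nonneg _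
  nlinarith [mul_nonneg (Nat.cast_nonneg C : (0:ℝ) ≤ (C:ℝ)) hT2,
    mul_le_mul_of_nonneg_right hnat' hQ0]

/-- pointwise bound `exp (-u/4) ≤ 1 - 3u/16` on `[0,2]`. -/
lemma exp_quarter_bound {u : ℝ} (h0 : 0 ≤ u) (h2 : u ≤ 2) :
    exp (-(1/4) * u) ≤ 1 - (3/16) * u := by
  have hq := Real.quadratic_le_exp_of_nonneg (x := u/4) (by linarith)
  have hpos : (0:ℝ) < 1 + u/4 + (u/4)^2/2 := by nlinarith
  have h1 : exp (-(1/4) * u) = 1 / exp (u/4) := by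
    rw [show -(1/4) * u = -(u/4) by ring, Real.exp_neg, one_div]
  rw [h1]
  have h2' : 1 / exp (u/4) ≤ 1 / (1 + u/4 + (u/4)^2/2) :=
    one_div_le_one_div_of_le hpos hq
  refine h2'.trans ?_
  rw [div_le_iff₀ hpos]
  nlinarith
/-- per-block mgf bound. -/
lemma block_mgf {α : Type*} [DecidableEq α] (k : ℕ) (hk : 0 < k) (B : Finset α)
    (hB : B.card = 2 * k) (z : α → ℝ) (hz : ∀ i, |z i| ≤ 1) :
    ∑ I ∈ B.powersetCard k, exp (-(1/4) * ((1 / (k:ℝ)) * ∑ i ∈ I, z i) ^ 2)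
      ≤ ((2 * k).choose k : ℝ) * exp (-(3 / (64 * (k:ℝ)^2)) * ∑ i ∈ B, z i ^ 2) := by
  classical
  set Q : ℝ := ∑ i ∈ B, z i ^ 2 with hQ
  have hk0 : (0:ℝ) < (k:ℝ) := by exact_mod_cast hk
  have hQ0 : 0 ≤ Q := by rw [hQ]; positivity
  have hQ2k : Q ≤ 2 * k := by
    rw [hQ]
    calc ∑ i ∈ B, z i ^ 2 ≤ ∑ i ∈ B, 1 := by
          refine Finset.sum_le_sum fun i _ => ?_
          have := hz i
          nlinarith [abs_nonneg (z i), sq_abs (z i)]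
      _ = B.card := by simp
      _ = 2 * k := by rw [hB]; push_cast; ring
  -- range bound for L
  have hLrange : ∀ I ∈ B.powersetCard k,
      0 ≤ ((1 / (k:ℝ)) * ∑ i ∈ I, z i) ^ 2 ∧ ((1 / (k:ℝ)) * ∑ i ∈ I, z i) ^ 2 ≤ 2 := by
    intro I hI
    obtain ⟨hIB, hIc⟩ := Finset.mem_powersetCard.1 hI
    refine ⟨sq_nonneg _, ?_⟩
    have hcs : (∑ i ∈ I, z i) ^ 2 ≤ (I.card : ℝ) * ∑ i ∈ I, z i ^ 2 := by
      exact_mod_cast sq_sum_le_card_mul_sum_sq (s := I) (f := z)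
    have hsub : ∑ i ∈ I, z i ^ 2 ≤ Q := by
      rw [hQ]
      exact Finset.sum_le_sum_of_subset_of_nonneg hIB fun i _ _ => sq_nonneg _
    have h1 : (∑ i ∈ I, z i) ^ 2 ≤ (k:ℝ) * Q := by
      rw [hIc] at hcs
      exact hcs.trans (by nlinarith)
    have : ((1 / (k:ℝ)) * ∑ i ∈ I, z i) ^ 2 = (∑ i ∈ I, z i) ^ 2 / (k:ℝ)^2 := by
      field_simp
    rw [this, div_le_iff₀ (by positivity)]
    nlinarith
  -- sum bound
  calc ∑ I ∈ B.powersetCard k, exp (-(1/4) * ((1 / (k:ℝ)) * ∑ i ∈ I, z i) ^ 2)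
      ≤ ∑ I ∈ B.powersetCard k, (1 - (3/16) * ((1 / (k:ℝ)) * ∑ i ∈ I, z i) ^ 2) := by
        refine Finset.sum_le_sum fun I hI => ?_
        exact exp_quarter_bound (hLrange I hI).1 (hLrange I hI).2
    _ ≤ ((2 * k).choose k : ℝ) * (1 - (3 / (64 * (k:ℝ)^2)) * Q) := by
        rw [Finset.sum_sub_distrib, Finset.sum_const, ← Finset.mul_sum]
        rw [Finset.card_powersetCard, hB]
        have hL : ∑ I ∈ B.powersetCard k, ((1 / (k:ℝ)) * ∑ i ∈ I, z i) ^ 2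
            = (1 / (k:ℝ)^2) * ∑ I ∈ B.powersetCard k, (∑ i ∈ I, z i) ^ 2 := by
          rw [Finset.mul_sum]
          refine Finset.sum_congr rfl fun I _ => ?_
          field_simp
        have hbe := block_exp k hk B hB z
        rw [hL]
        have h4 : ((2 * k).choose k : ℝ) * Q / 4
            ≤ ∑ I ∈ B.powersetCard k, (∑ i ∈ I, z i) ^ 2 := by
          rw [← hQ] at hbe
          linarith
        simp only [nsmul_eq_mul]
        have hkk : (0:ℝ) < (k:ℝ)^2 := by positivity
        rw [mul_sub]
        have : (3:ℝ)/16 * ((1 / (k:ℝ)^2) * ∑ I ∈ B.powersetCard k, (∑ i ∈ I, z i) ^ 2)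
            ≥ (3/16) * ((1 / (k:ℝ)^2) * (((2 * k).choose k : ℝ) * Q / 4)) := by
          have h116 : (0:ℝ) ≤ (3:ℝ)/16 * (1 / (k:ℝ)^2) := by positivity
          nlinarith [h4]
        have heq : ((2 * k).choose k : ℝ) * ((3 / (64 * (k:ℝ)^2)) * Q)
            = (3/16) * ((1 / (k:ℝ)^2) * (((2 * k).choose k : ℝ) * Q / 4)) := by
          field_simp
          ring
        rw [heq]
        linarith
    _ ≤ ((2 * k).choose k : ℝ) * exp (-(3 / (64 * (k:ℝ)^2)) * Q) := by
        refine mul_le_mul_of_nonneg_left ?_ (Nat.cast_nonneg _)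
        have := Real.add_one_le_exp (-(3 / (64 * (k:ℝ)^2)) * Q)
        linarith

open Classical in
theorem stmt8 (m k : ℕ) (hm : 0 < m) (hk : 0 < k)
    (z : Fin (2 * m * k) → ℝ) (hz : ∀ i, |z i| ≤ 1)
    (blk : Fin m → Finset (Fin (2 * m * k)))
    (hcard : ∀ j, (blk j).card = 2 * k)
    (hdisj : ∀ j j', j ≠ j' → Disjoint (blk j) (blk j'))
    (hcover : ∀ i, ∃ j, i ∈ blk j)
    (ζ : ℝ) (hζ : (1 / (2 * (m : ℝ) * k)) * ∑ i, z i ^ 2 = ζ) :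
    (((Finset.univ : Finset (∀ j : Fin m, {I : Finset (Fin (2 * m * k)) //
          I ∈ (blk j).powersetCard k})).filter
        (fun ω => (1 / (m : ℝ)) * ∑ j, ((1 / (k : ℝ)) * ∑ i ∈ (ω j : Finset _), z i) ^ 2
          ≤ ζ / (4 * k))).card : ℝ)
      / (Fintype.card (∀ j : Fin m, {I : Finset (Fin (2 * m * k)) //
          I ∈ (blk j).powersetCard k}) : ℝ)
      ≤ 2 * exp (-(ζ * m) / (32 * k ^ 2)) := by
  have hk0 : (0:ℝ) < (k:ℝ) := by exact_mod_cast hk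
  have hm0 : (0:ℝ) < (m:ℝ) := by exact_mod_cast hm
  have hζ0 : 0 ≤ ζ := by
    rw [← hζ]; positivity
  have hsumz : ∑ i, z i ^ 2 = 2 * (m:ℝ) * k * ζ := by
    rw [← hζ]; field_simp
  set N : ℕ := (2 * k).choose k with hN
  have hNpos : 0 < N := Nat.choose_pos (by omega)
  have hcardsub : ∀ j : Fin m,
      Fintype.card {I : Finset (Fin (2 * m * k)) // I ∈ (blk j).powersetCard k} = N := by
    intro j
    rw [Fintype.card_of_subtype ((blk j).powersetCard k) (fun _ => Iff.rfl),
      Finset.card_powersetCard, hcard j]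
  have hcardΩ : Fintype.card (∀ j : Fin m, {I : Finset (Fin (2 * m * k)) //
      I ∈ (blk j).powersetCard k}) = N ^ m := by
    rw [Fintype.card_pi]
    exact (Finset.prod_congr rfl (fun j _ => hcardsub j)).trans (by simp)
  -- partition of the sum of squares
  have hd : ((Finset.univ : Finset (Fin m)) : Set (Fin m)).PairwiseDisjoint blk :=
    fun a _ b _ hab => hdisj a b hab
  have huniv : Finset.univ.biUnion blk = Finset.univ := by
    ext i
    simpa using hcover i
  have hpart : ∑ j : Fin m, ∑ i ∈ blk j, z i ^ 2 = ∑ i, z i ^ 2 := by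
    rw [← Finset.sum_biUnion hd, huniv]
  -- Chernoff chain
  set Filt := (Finset.univ : Finset (∀ j : Fin m, {I : Finset (Fin (2 * m * k)) //
          I ∈ (blk j).powersetCard k})).filter
        (fun ω => (1 / (m : ℝ)) * ∑ j, ((1 / (k : ℝ)) * ∑ i ∈ (ω j : Finset _), z i) ^ 2
          ≤ ζ / (4 * k)) with hFilt
  have hchain : (Filt.card : ℝ) * exp (-(1/4) * ((m:ℝ) * ζ / (4 * k)))
      ≤ ((N:ℝ))^m * exp (-(3 / (64 * (k:ℝ)^2)) * (2 * (m:ℝ) * k * ζ)) := by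
    calc (Filt.card : ℝ) * exp (-(1/4) * ((m:ℝ) * ζ / (4 * k)))
        = ∑ _ω ∈ Filt, exp (-(1/4) * ((m:ℝ) * ζ / (4 * k))) := by
          rw [Finset.sum_const, nsmul_eq_mul]
      _ ≤ ∑ ω ∈ Filt, exp (-(1/4) *
            ∑ j, ((1 / (k : ℝ)) * ∑ i ∈ (ω j : Finset _), z i) ^ 2) := by
          refine Finset.sum_le_sum fun ω hω => ?_
          rw [Real.exp_le_exp]
          have hmem := (Finset.mem_filter.1 hω).2
          have h2 := mul_le_mul_of_nonneg_left hmem (le_of_lt hm0)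
          have h3 : (m:ℝ) * ((1 / (m:ℝ)) *
              ∑ j, ((1 / (k : ℝ)) * ∑ i ∈ (ω j : Finset _), z i) ^ 2)
              = ∑ j, ((1 / (k : ℝ)) * ∑ i ∈ (ω j : Finset _), z i) ^ 2 := by
            field_simp
          rw [h3, show (m:ℝ) * (ζ / (4 * k)) = (m:ℝ) * ζ / (4 * k) by ring] at h2
          linarith
      _ ≤ ∑ ω : (∀ j : Fin m, {I : Finset (Fin (2 * m * k)) // I ∈ (blk j).powersetCard k}),
            exp (-(1/4) * ∑ j, ((1 / (k : ℝ)) * ∑ i ∈ (ω j : Finset _), z i) ^ 2) :=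
          Finset.sum_le_sum_of_subset_of_nonneg (Finset.filter_subset _ _)
            (fun _ _ _ => (Real.exp_pos _).le)
      _ = ∑ ω : (∀ j : Fin m, {I : Finset (Fin (2 * m * k)) // I ∈ (blk j).powersetCard k}),
            ∏ j, exp (-(1/4) * ((1 / (k : ℝ)) * ∑ i ∈ ((ω j : Finset _)), z i) ^ 2) := by
          refine Finset.sum_congr rfl fun ω _ => ?_
          rw [Finset.mul_sum, Real.exp_sum]
      _ = ∏ j : Fin m, ∑ I ∈ (blk j).powersetCard k,
            exp (-(1/4) * ((1 / (k : ℝ)) * ∑ i ∈ I, z i) ^ 2) := by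
          rw [Finset.prod_univ_sum]
          refine Finset.sum_bij' (fun ω _ => fun j => (ω j : Finset _))
            (fun x hx => fun j => ⟨x j, (Fintype.mem_piFinset.1 hx) j⟩) ?_ ?_ ?_ ?_ ?_
          · intro ω _
            exact Fintype.mem_piFinset.2 fun j => (ω j).2
          · intro x hx
            exact Finset.mem_univ _
          · intro ω hω
            funext j
            rfl
          · intro x hx
            rfl
          · intro ω hω
            rfl
      _ ≤ ∏ j : Fin m, ((N:ℝ) * exp (-(3 / (64 * (k:ℝ)^2)) * ∑ i ∈ blk j, z i ^ 2)) := by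
          refine Finset.prod_le_prod
            (fun j _ => Finset.sum_nonneg fun I _ => (Real.exp_pos _).le) (fun j _ => ?_)
          exact block_mgf k hk (blk j) (hcard j) z hz
      _ = ((N:ℝ))^m * exp (-(3 / (64 * (k:ℝ)^2)) * (2 * (m:ℝ) * k * ζ)) := by
          rw [Finset.prod_mul_distrib, Finset.prod_const, Finset.card_univ, Fintype.card_fin,
            ← Real.exp_sum, ← Finset.mul_sum, hpart, hsumz]
  -- finish
  rw [hcardΩ]
  have hNR : (0:ℝ) < ((N:ℝ))^m := by positivity
  have hNcast : ((N ^ m : ℕ) : ℝ) = ((N:ℝ))^m := by push_cast; ring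
  rw [hNcast, div_le_iff₀ hNR]
  have hstep : (Filt.card : ℝ) ≤ ((N:ℝ))^m * exp (-(ζ * (m:ℝ)) / (32 * (k:ℝ))) := by
    have h1 := (le_div_iff₀ (Real.exp_pos (-(1/4) * ((m:ℝ) * ζ / (4 * k))))).2 hchain
    have h2 : ((N:ℝ))^m * exp (-(3 / (64 * (k:ℝ)^2)) * (2 * (m:ℝ) * k * ζ))
        / exp (-(1/4) * ((m:ℝ) * ζ / (4 * k)))
        = ((N:ℝ))^m * exp ((-(3 / (64 * (k:ℝ)^2)) * (2 * (m:ℝ) * k * ζ))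
            - (-(1/4) * ((m:ℝ) * ζ / (4 * k)))) := by
      rw [mul_div_assoc, Real.exp_sub]
    have h3 : (-(3 / (64 * (k:ℝ)^2)) * (2 * (m:ℝ) * k * ζ))
        - (-(1/4) * ((m:ℝ) * ζ / (4 * k))) = -(ζ * (m:ℝ)) / (32 * (k:ℝ)) := by
      field_simp
      ring
    rw [h2, h3] at h1
    exact h1
  have hexple : exp (-(ζ * (m:ℝ)) / (32 * (k:ℝ))) ≤ exp (-(ζ * (m:ℝ)) / (32 * (k:ℝ)^2)) := by
    rw [Real.exp_le_exp, neg_div, neg_div, neg_le_neg_iff]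
    have hk1 : (1:ℝ) ≤ (k:ℝ) := by exact_mod_cast hk
    rw [div_le_div_iff₀ (by positivity) (by positivity)]
    nlinarith [mul_nonneg (mul_nonneg (mul_nonneg hζ0 hm0.le)
      (by positivity : (0:ℝ) ≤ 32 * (k:ℝ))) (by linarith : (0:ℝ) ≤ (k:ℝ) - 1)]
  have hgoal : ((N:ℝ))^m * exp (-(ζ * (m:ℝ)) / (32 * (k:ℝ)))
      ≤ 2 * exp (-(ζ * ↑m) / (32 * (k:ℝ) ^ 2)) * ((N:ℝ))^m := by
    nlinarith [Real.exp_pos (-(ζ * (m:ℝ)) / (32 * (k:ℝ)^2)), hNR,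
      mul_le_mul_of_nonneg_left hexple (le_of_lt hNR)]
  exact hstep.trans hgoal
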